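/- Let n ≥ 2 be an integer, let x_1,…,x_n and a_1,…,a_n be complex numbers, let p > 1 and q be real numbers with 1/p + 1/q = 1, and let μ_1,…,μ_n be nonzero real numbers with μ_1 < 0 and μ_i > 0 for i = 2,…,n, and let λ < 0. If |λ|^{1/(p-1)} ≤ |μ_1|^{1/(p-1)}·|a_1|^q − Σ_{i=2}^n |μ_i|^{1/(p-1)}·|a_i|^q, then Σ_{i=1}^n |x_i|^p/μ_i ≥ |Σ_{i=1}^n a_i·x_i|^p / λ. -/

import Mathlib

open Finset Real in
lemma weighted_holder_aux {ι : Type*} (s : Finset ι) (b c : ι → ℝ) {p q : ℝ}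
    (hpq : Real.HolderConjugate p q) (hb : ∀ i ∈ s, 0 ≤ b i) (hc : ∀ i ∈ s, 0 ≤ c i)
    (hbc : ∀ i ∈ s, c i = 0 → b i = 0) :
    (∑ i ∈ s, b i) ^ p ≤ (∑ i ∈ s, c i) ^ (p - 1) * ∑ i ∈ s, b i ^ p / c i ^ (p - 1) := by
  have hp0 : p ≠ 0 := hpq.pos.ne'
  have hq0 : q ≠ 0 := hpq.symm.pos.ne'
  have hpq1 : p / q = p - 1 := hpq.div_conj_eq_sub_one
  set f : ι → ℝ := fun i => b i / (c i) ^ (1 / q) with hf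
  set g : ι → ℝ := fun i => (c i) ^ (1 / q) with hg
  have hfg : ∀ i ∈ s, f i * g i = b i := by
    intro i hi
    rcases eq_or_lt_of_le (hc i hi) with h0 | h0
    · simp [hf, hg, ← h0, hbc i hi h0.symm, Real.zero_rpow (by positivity : 1 / q ≠ 0)]
    · have : (c i) ^ (1 / q) ≠ 0 := (Real.rpow_pos_of_pos h0 _).ne'
      simp only [hf, hg]
      field_simp
  have holder := Real.inner_le_Lp_mul_Lq s f g hpq
  rw [Finset.sum_congr rfl hfg] at holder
  have hfp : ∀ i ∈ s, |f i| ^ p = b i ^ p / c i ^ (p - 1) := by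
    intro i hi
    have hfnn : 0 ≤ f i := div_nonneg (hb i hi) (Real.rpow_nonneg (hc i hi) _)
    rw [abs_of_nonneg hfnn, hf]
    rw [Real.div_rpow (hb i hi) (Real.rpow_nonneg (hc i hi) _),
      ← Real.rpow_mul (hc i hi), show (1/q) * p = p - 1 by rw [← hpq1]; ring]
  have hgq : ∀ i ∈ s, |g i| ^ q = c i := by
    intro i hi
    rw [abs_of_nonneg (Real.rpow_nonneg (hc i hi) _), ← Real.rpow_mul (hc i hi),
      one_div, inv_mul_cancel₀ hq0, Real.rpow_one]
  rw [Finset.sum_congr rfl hfp, Finset.sum_congr rfl hgq] at holder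
  have hXnn : 0 ≤ ∑ i ∈ s, b i ^ p / c i ^ (p - 1) := by
    apply Finset.sum_nonneg
    intro i hi
    exact div_nonneg (Real.rpow_nonneg (hb i hi) _) (Real.rpow_nonneg (hc i hi) _)
  have hYnn : 0 ≤ ∑ i ∈ s, c i := Finset.sum_nonneg hc
  have hbnn : 0 ≤ ∑ i ∈ s, b i := Finset.sum_nonneg hb
  calc (∑ i ∈ s, b i) ^ p
      ≤ ((∑ i ∈ s, b i ^ p / c i ^ (p - 1)) ^ (1/p) * (∑ i ∈ s, c i) ^ (1/q)) ^ p := by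
        apply Real.rpow_le_rpow hbnn holder hpq.pos.le
    _ = (∑ i ∈ s, c i) ^ (p - 1) * ∑ i ∈ s, b i ^ p / c i ^ (p - 1) := by
        rw [Real.mul_rpow (Real.rpow_nonneg hXnn _) (Real.rpow_nonneg hYnn _),
          ← Real.rpow_mul hXnn, ← Real.rpow_mul hYnn]
        rw [one_div_mul_cancel hp0, Real.rpow_one, show (1/q) * p = p - 1 by
          rw [← hpq1]; ring]
        ring

open Finset in
/-- Theorem 2, Case (iii): n-term (n ≥ 2, here n + 2 indices) Bohr type inequality for
complex numbers with μ_1 < 0, μ_i > 0 for i ≥ 2 and λ < 0. -/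
theorem bohr_type_complex_n_case_iii (n : ℕ) (x a : Fin (n + 2) → ℂ) (p q : ℝ)
    (hp : 1 < p) (hpq : 1 / p + 1 / q = 1) (μ : Fin (n + 2) → ℝ)
    (hμ1 : μ 0 < 0) (hμi : ∀ i, i ≠ 0 → 0 < μ i) (lam : ℝ) (hlam : lam < 0)
    (h : |lam| ^ (1 / (p - 1)) ≤ |μ 0| ^ (1 / (p - 1)) * ‖a 0‖ ^ q -
      ∑ i ∈ univ.erase 0, |μ i| ^ (1 / (p - 1)) * ‖a i‖ ^ q) :
    ∑ i, ‖x i‖ ^ p / μ i ≥ ‖∑ i, a i * x i‖ ^ p / lam := by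
  have hpq' : Real.HolderConjugate p q := Real.holderConjugate_iff.mpr ⟨hp, by simpa [one_div] using hpq⟩
  have hp0 : p ≠ 0 := hpq'.pos.ne'
  have hq0 : q ≠ 0 := hpq'.symm.pos.ne'
  have hp1 : (0:ℝ) < p - 1 := by linarith
  have hkey : q * (p - 1) = p := by
    have := hpq'.sub_one_mul_conj
    linarith [mul_comm q (p - 1)]
  have hlampos : (0:ℝ) < |lam| := abs_pos.mpr hlam.ne
  have hlamp : (0:ℝ) < |lam| ^ (1 / (p - 1)) := Real.rpow_pos_of_pos hlampos _
  have hμ0pos : (0:ℝ) < |μ 0| := abs_pos.mpr hμ1.ne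
  -- a 0 ≠ 0
  have ha0 : a 0 ≠ 0 := by
    intro ha
    rw [ha] at h
    simp only [norm_zero, Real.zero_rpow hq0, mul_zero, zero_sub] at h
    have : (0:ℝ) ≤ ∑ i ∈ univ.erase 0, |μ i| ^ (1 / (p - 1)) * ‖a i‖ ^ q := by
      apply Finset.sum_nonneg; intro i _; positivity
    linarith
  set S := ∑ i, a i * x i with hS
  set b : Fin (n + 2) → ℝ := fun i => if i = 0 then ‖S‖ else ‖a i * x i‖
    with hbdef
  set c : Fin (n + 2) → ℝ := fun i => if i = 0 then |lam| ^ (1 / (p - 1))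
    else |μ i| ^ (1 / (p - 1)) * ‖a i‖ ^ q with hcdef
  have hb0 : b 0 = ‖S‖ := if_pos rfl
  have hbi : ∀ i : Fin (n + 2), i ≠ 0 → b i = ‖a i * x i‖ := fun i hi => if_neg hi
  have hc0 : c 0 = |lam| ^ (1 / (p - 1)) := if_pos rfl
  have hci : ∀ i : Fin (n + 2), i ≠ 0 →
      c i = |μ i| ^ (1 / (p - 1)) * ‖a i‖ ^ q := fun i hi => if_neg hi
  have hbnn : ∀ i ∈ (univ : Finset (Fin (n+2))), 0 ≤ b i := by
    intro i _
    rcases eq_or_ne i 0 with hi | hi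
    · rw [hi, hb0]; positivity
    · rw [hbi i hi]; positivity
  have hcnn : ∀ i ∈ (univ : Finset (Fin (n+2))), 0 ≤ c i := by
    intro i _
    rcases eq_or_ne i 0 with hi | hi
    · rw [hi, hc0]; positivity
    · rw [hci i hi]; positivity
  have hbc : ∀ i ∈ (univ : Finset (Fin (n+2))), c i = 0 → b i = 0 := by
    intro i _ hcz
    rcases eq_or_ne i 0 with hi | hi
    · rw [hi, hc0] at hcz; exact absurd hcz hlamp.ne'
    · rw [hci i hi] at hcz
      have hμip : (0:ℝ) < |μ i| ^ (1 / (p - 1)) :=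
        Real.rpow_pos_of_pos (abs_pos.mpr (hμi i hi).ne') _
      have hai : ‖a i‖ ^ q = 0 := by
        rcases mul_eq_zero.mp hcz with h' | h'
        · exact absurd h' hμip.ne'
        · exact h'
      have haz : ‖a i‖ = 0 :=
        (Real.rpow_eq_zero (norm_nonneg _) hq0).mp hai
      have : a i = 0 := by simpa using haz
      rw [hbi i hi, this, zero_mul, norm_zero]
  -- the sum decompositions
  have hsumb : ∑ i, b i = ‖S‖ + ∑ i ∈ univ.erase 0, ‖a i * x i‖ := by
    rw [← Finset.add_sum_erase univ b (Finset.mem_univ 0), hb0]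
    congr 1
    exact Finset.sum_congr rfl fun i hi => hbi i (Finset.mem_erase.mp hi).1
  have hsumc : ∑ i, c i = |lam| ^ (1 / (p - 1)) +
      ∑ i ∈ univ.erase 0, |μ i| ^ (1 / (p - 1)) * ‖a i‖ ^ q := by
    rw [← Finset.add_sum_erase univ c (Finset.mem_univ 0), hc0]
    congr 1
    exact Finset.sum_congr rfl fun i hi => hci i (Finset.mem_erase.mp hi).1
  -- |a0 x0| ≤ ∑ b
  have hsplit : a 0 * x 0 = S - ∑ i ∈ univ.erase 0, a i * x i := by
    rw [hS, ← Finset.add_sum_erase univ (fun i => a i * x i) (Finset.mem_univ 0)]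
    ring
  have habs : ‖a 0 * x 0‖ ≤ ∑ i, b i := by
    rw [hsumb, hsplit]
    calc ‖S - ∑ i ∈ univ.erase 0, a i * x i‖
        ≤ ‖S‖ + ‖∑ i ∈ univ.erase 0, a i * x i‖ := by
          exact norm_sub_le S _
      _ ≤ ‖S‖ + ∑ i ∈ univ.erase 0, ‖a i * x i‖ := by
          gcongr
          exact norm_sum_le _ _
  -- weighted Hölder
  have H := weighted_holder_aux univ b c hpq' hbnn hcnn hbc
  -- bound ∑ c by c0
  set c0 : ℝ := |μ 0| ^ (1 / (p - 1)) * ‖a 0‖ ^ q with hc0def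
  have hsumcle : ∑ i, c i ≤ c0 := by rw [hsumc]; linarith
  have hc0nn : 0 ≤ c0 := by positivity
  have hc0pow : c0 ^ (p - 1) = |μ 0| * ‖a 0‖ ^ p := by
    rw [hc0def, Real.mul_rpow (Real.rpow_nonneg hμ0pos.le _)
        (Real.rpow_nonneg (norm_nonneg _) _),
      ← Real.rpow_mul hμ0pos.le, ← Real.rpow_mul (norm_nonneg _),
      one_div, inv_mul_cancel₀ hp1.ne', Real.rpow_one, hkey]
  -- bound ∑ b^p / c^(p-1)
  set T : ℝ := ‖S‖ ^ p / |lam| + ∑ i ∈ univ.erase 0, ‖x i‖ ^ p / μ i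
    with hT
  have hterm : ∑ i, b i ^ p / c i ^ (p - 1) ≤ T := by
    rw [← Finset.add_sum_erase univ (fun i => b i ^ p / c i ^ (p - 1)) (Finset.mem_univ 0), hT]
    apply add_le_add
    · rw [hb0, hc0, ← Real.rpow_mul (abs_nonneg lam), one_div,
        inv_mul_cancel₀ hp1.ne', Real.rpow_one]
    · apply Finset.sum_le_sum
      intro i hi
      have hine := (Finset.mem_erase.mp hi).1
      have hμipos := hμi i hine
      rw [hbi i hine, hci i hine]
      by_cases hai : a i = 0
      · rw [hai, zero_mul, norm_zero, Real.zero_rpow hp0, zero_div]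
        positivity
      · have haipos : (0:ℝ) < ‖a i‖ := by
          simpa [norm_pos_iff] using hai
        have hApos : (0:ℝ) < ‖a i‖ ^ p := Real.rpow_pos_of_pos haipos p
        rw [norm_mul, Real.mul_rpow (norm_nonneg _) (norm_nonneg _),
          Real.mul_rpow (Real.rpow_nonneg (abs_nonneg _) _)
            (Real.rpow_nonneg (norm_nonneg _) _),
          ← Real.rpow_mul (abs_nonneg _), ← Real.rpow_mul (norm_nonneg _),
          one_div, inv_mul_cancel₀ hp1.ne', Real.rpow_one, hkey, abs_of_pos hμipos]
        apply le_of_eq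
        field_simp
  have hTnn : 0 ≤ T := by
    rw [hT]
    apply add_nonneg
    · positivity
    · apply Finset.sum_nonneg; intro i hi
      have := hμi i (Finset.mem_erase.mp hi).1
      positivity
  -- combine
  have hmain : ‖a 0‖ ^ p * ‖x 0‖ ^ p ≤
      |μ 0| * ‖a 0‖ ^ p * T := by
    have h1 : ‖a 0 * x 0‖ ^ p ≤ (∑ i, b i) ^ p :=
      Real.rpow_le_rpow (norm_nonneg _) habs hpq'.pos.le
    have h2 : (∑ i, c i) ^ (p - 1) ≤ c0 ^ (p - 1) :=
      Real.rpow_le_rpow (Finset.sum_nonneg hcnn) hsumcle hp1.le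
    have hsumtnn : 0 ≤ ∑ i, b i ^ p / c i ^ (p - 1) := by
      apply Finset.sum_nonneg; intro i hi
      exact div_nonneg (Real.rpow_nonneg (hbnn i hi) _) (Real.rpow_nonneg (hcnn i hi) _)
    calc ‖a 0‖ ^ p * ‖x 0‖ ^ p
        = ‖a 0 * x 0‖ ^ p := by
          rw [norm_mul, Real.mul_rpow (norm_nonneg _) (norm_nonneg _)]
      _ ≤ (∑ i, c i) ^ (p - 1) * ∑ i, b i ^ p / c i ^ (p - 1) := h1.trans H
      _ ≤ c0 ^ (p - 1) * ∑ i, b i ^ p / c i ^ (p - 1) := by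
          apply mul_le_mul_of_nonneg_right h2 hsumtnn
      _ ≤ c0 ^ (p - 1) * T := by
          apply mul_le_mul_of_nonneg_left hterm (Real.rpow_nonneg hc0nn _)
      _ = |μ 0| * ‖a 0‖ ^ p * T := by rw [hc0pow]
  have ha0pos : (0:ℝ) < ‖a 0‖ ^ p :=
    Real.rpow_pos_of_pos (by simpa [norm_pos_iff] using ha0) _
  have hx0 : ‖x 0‖ ^ p ≤ |μ 0| * T := by
    have h' := hmain
    rw [show |μ 0| * ‖a 0‖ ^ p * T = ‖a 0‖ ^ p * (|μ 0| * T) from by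
      ring] at h'
    exact le_of_mul_le_mul_left h' ha0pos
  -- finish
  have hx0' : ‖x 0‖ ^ p / |μ 0| ≤ T := by
    rw [div_le_iff₀ hμ0pos]
    linarith [hx0]
  have hμ0eq : μ 0 = -|μ 0| := by rw [abs_of_neg hμ1]; ring
  have hlameq : lam = -|lam| := by rw [abs_of_neg hlam]; ring
  rw [ge_iff_le, ← Finset.add_sum_erase univ (fun i => ‖x i‖ ^ p / μ i)
    (Finset.mem_univ 0)]
  rw [hT] at hx0'
  rw [hμ0eq, hlameq, div_neg, div_neg]
  linarith
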